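/- arXiv:1810.04468 — 2 statements merged into one kernel-verified Lean document; each statement's English description precedes it below -/
import Mathlib

section
/- For every x ∈ [0,1), (1 - 2/(√((1+x)/(1-x)) + 1))^{1/√(2 ln(1/x))} ≤ e^{-1}, interpreting the expression by its limit e^{-1} as x → 1⁻ and the value at x = 0 appropriately. -/
open Real Set

lemma aux_deriv1 (x : ℝ) (h0 : 0 < x) (h1 : x < 1) :
    HasDerivAt (fun t : ℝ => Real.log (1+t) - Real.log (1-t) - 2*t)
      (1/(1+x) - (-1)/(1-x) - 2) x := by
  have h1' : (1:ℝ) + x ≠ 0 := by linarith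
  have h2' : (1:ℝ) - x ≠ 0 := by linarith
  have ha : HasDerivAt (fun t : ℝ => Real.log (1+t)) (1/(1+x)) x := by
    simpa using (((hasDerivAt_id x).const_add 1).log h1')
  have hb : HasDerivAt (fun t : ℝ => Real.log (1-t)) ((-1)/(1-x)) x := by
    simpa using (((hasDerivAt_id x).const_sub 1).log h2')
  have hc : HasDerivAt (fun t : ℝ => 2*t) 2 x := by
    simpa using ((hasDerivAt_id x).const_mul 2)
  exact (ha.sub hb).sub hc

lemma aux1 : ∀ t ∈ Set.Ico (0:ℝ) 1, 2*t ≤ Real.log (1+t) - Real.log (1-t) := by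
  have key : MonotoneOn (fun t : ℝ => Real.log (1+t) - Real.log (1-t) - 2*t)
      (Set.Ico 0 1) := by
    apply monotoneOn_of_deriv_nonneg (convex_Ico 0 1)
    · apply ContinuousOn.sub
      apply ContinuousOn.sub
      · exact (continuousOn_const.add continuousOn_id).log
          (fun y hy => by intro h; simp only [id, Pi.add_apply, Pi.sub_apply] at h; linarith [hy.1])
      · exact (continuousOn_const.sub continuousOn_id).log
          (fun y hy => by intro h; simp only [id, Pi.add_apply, Pi.sub_apply] at h; linarith [hy.2])
      · exact continuousOn_const.mul continuousOn_id
    · intro y hy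
      rw [interior_Ico] at hy
      exact (aux_deriv1 y hy.1 hy.2).differentiableAt.differentiableWithinAt
    · intro y hy
      rw [interior_Ico] at hy
      rw [(aux_deriv1 y hy.1 hy.2).deriv]
      have hy1 : (0:ℝ) < 1 + y := by linarith [hy.1]
      have hy2 : (0:ℝ) < 1 - y := by linarith [hy.2]
      have : 1/(1+y) - (-1)/(1-y) - 2 = 2*y^2/((1+y)*(1-y)) := by
        field_simp; ring
      rw [this]; positivity
  intro t ht
  have h0 : (0:ℝ) ∈ Set.Ico (0:ℝ) 1 := by constructor <;> norm_num
  have := key h0 ht ht.1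
  simp at this
  linarith

lemma aux_deriv2 (x : ℝ) (h0 : 0 < x) (h1 : x < 1) :
    HasDerivAt (fun t : ℝ => (Real.log (1+t) - Real.log (1-t))^2
        - 2*(Real.log (1+t^2) - Real.log (1-t^2)))
      ((2:ℕ) * (Real.log (1+x) - Real.log (1-x))^1 * (1/(1+x) - (-1)/(1-x))
        - 2 * ((2*x^1)/(1+x^2) - (-(2*x^1))/(1-x^2))) x := by
  have h1' : (1:ℝ) + x ≠ 0 := by linarith
  have h2' : (1:ℝ) - x ≠ 0 := by linarith
  have hx2 : x^2 < 1 := by nlinarith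
  have h3' : (1:ℝ) + x^2 ≠ 0 := by nlinarith
  have h4' : (1:ℝ) - x^2 ≠ 0 := by nlinarith
  have ha : HasDerivAt (fun t : ℝ => Real.log (1+t)) (1/(1+x)) x := by
    simpa using (((hasDerivAt_id x).const_add 1).log h1')
  have hb : HasDerivAt (fun t : ℝ => Real.log (1-t)) ((-1)/(1-x)) x := by
    simpa using (((hasDerivAt_id x).const_sub 1).log h2')
  have hc : HasDerivAt (fun t : ℝ => Real.log (1+t^2)) ((2*x^1)/(1+x^2)) x := by
    simpa using (((hasDerivAt_pow 2 x).const_add 1).log h3')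
  have hd : HasDerivAt (fun t : ℝ => Real.log (1-t^2)) ((-(2*x^1))/(1-x^2)) x := by
    have : HasDerivAt (fun t : ℝ => 1 - t^2) (-(2*x^1)) x := by
      simpa using ((hasDerivAt_pow 2 x).const_sub 1)
    simpa using (this.log h4')
  exact ((ha.sub hb).pow 2).sub ((hc.sub hd).const_mul 2)

lemma aux2 : ∀ t ∈ Set.Ico (0:ℝ) 1,
    2*(Real.log (1+t^2) - Real.log (1-t^2)) ≤ (Real.log (1+t) - Real.log (1-t))^2 := by
  have key : MonotoneOn (fun t : ℝ => (Real.log (1+t) - Real.log (1-t))^2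
      - 2*(Real.log (1+t^2) - Real.log (1-t^2))) (Set.Ico 0 1) := by
    apply monotoneOn_of_deriv_nonneg (convex_Ico 0 1)
    · apply ContinuousOn.sub
      · apply ContinuousOn.pow
        apply ContinuousOn.sub
        · exact (continuousOn_const.add continuousOn_id).log
            (fun y hy => by intro h; simp only [id, Pi.add_apply, Pi.sub_apply] at h; linarith [hy.1])
        · exact (continuousOn_const.sub continuousOn_id).log
            (fun y hy => by intro h; simp only [id, Pi.add_apply, Pi.sub_apply] at h; linarith [hy.2])
      · apply ContinuousOn.mul continuousOn_const
        apply ContinuousOn.sub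
        · exact (continuousOn_const.add (continuousOn_pow 2)).log
            (fun y hy => by intro h; simp only [Pi.add_apply] at h; nlinarith [hy.1])
        · exact (continuousOn_const.sub (continuousOn_pow 2)).log
            (fun y hy => by intro h; simp only [Pi.sub_apply] at h; have := hy.1; have := hy.2; nlinarith)
    · intro y hy
      rw [interior_Ico] at hy
      exact (aux_deriv2 y hy.1 hy.2).differentiableAt.differentiableWithinAt
    · intro y hy
      rw [interior_Ico] at hy
      obtain ⟨hy0, hy1⟩ := hy
      rw [(aux_deriv2 y hy0 hy1).deriv]
      have e1 : (0:ℝ) < 1 + y := by linarith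
      have e2 : (0:ℝ) < 1 - y := by linarith
      have e3 : (0:ℝ) < 1 + y^2 := by positivity
      have e4 : (0:ℝ) < 1 - y^2 := by nlinarith
      have hL : 2*y ≤ Real.log (1+y) - Real.log (1-y) := aux1 y ⟨le_of_lt hy0, hy1⟩
      set L := Real.log (1+y) - Real.log (1-y) with hLdef
      have hpos : 0 < 1/(1+y) - (-1)/(1-y) := by
        have : 1/(1+y) - (-1)/(1-y) = 2/((1+y)*(1-y)) := by field_simp; ring
        rw [this]; positivity
      have step : (2:ℝ) * (2*y)^1 * (1/(1+y) - (-1)/(1-y))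
          - 2 * ((2*y^1)/(1+y^2) - (-(2*y^1))/(1-y^2))
          = 8*y^3/((1-y^2)*(1+y^2)) := by
        field_simp; ring
      have mono : (2:ℝ) * (2*y)^1 * (1/(1+y) - (-1)/(1-y))
          ≤ (2:ℝ) * L^1 * (1/(1+y) - (-1)/(1-y)) := by
        have : (0:ℝ) ≤ 2 * (1/(1+y) - (-1)/(1-y)) := by linarith
        calc (2:ℝ) * (2*y)^1 * (1/(1+y) - (-1)/(1-y))
            = (2*y) * (2 * (1/(1+y) - (-1)/(1-y))) := by ring
          _ ≤ L * (2 * (1/(1+y) - (-1)/(1-y))) := by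
              apply mul_le_mul_of_nonneg_right _ this
              simpa using hL
          _ = (2:ℝ) * L^1 * (1/(1+y) - (-1)/(1-y)) := by ring
      have final : (0:ℝ) ≤ 8*y^3/((1-y^2)*(1+y^2)) := by positivity
      push_cast
      nlinarith [mono, step, final]
  intro t ht
  have h0 : (0:ℝ) ∈ Set.Ico (0:ℝ) 1 := by constructor <;> norm_num
  have := key h0 ht ht.1
  simp at this
  linarith

theorem stmt_2 (x : ℝ) (hx : x ∈ Set.Ioo (0 : ℝ) 1) :
    (1 - 2 / (Real.sqrt ((1 + x) / (1 - x)) + 1))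
        ^ (1 / Real.sqrt (2 * Real.log (1 / x))) ≤ Real.exp (-1) := by
  obtain ⟨hx0, hx1⟩ := hx
  have h1x : (0:ℝ) < 1 - x := by linarith
  have h1x' : (0:ℝ) < 1 + x := by linarith
  set s := Real.sqrt ((1+x)/(1-x)) with hs
  have hfrac : (1:ℝ) < (1+x)/(1-x) := by rw [lt_div_iff₀ h1x]; linarith
  have hs1 : 1 < s := by
    have h := Real.sqrt_lt_sqrt (by norm_num : (0:ℝ) ≤ 1) hfrac
    simpa using h
  have hs0 : 0 < s := by linarith
  set t := 1/s with htdef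
  have ht0 : 0 < t := by positivity
  have ht1 : t < 1 := by rw [htdef]; rw [div_lt_one hs0]; exact hs1
  have hs2 : s^2 = (1+x)/(1-x) := Real.sq_sqrt (le_of_lt (by positivity))
  have ht2 : t^2 = (1-x)/(1+x) := by
    rw [htdef, div_pow, one_pow, hs2, one_div_div]
  have hxval : x = (1-t^2)/(1+t^2) := by
    rw [ht2]
    field_simp
    ring
  have hbval : 1 - 2/(s+1) = (1-t)/(1+t) := by
    rw [htdef]
    field_simp
    ring
  -- positivity of ingredients
  have ht1p : (0:ℝ) < 1 + t := by linarith
  have ht1m : (0:ℝ) < 1 - t := by linarith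
  have ht2p : (0:ℝ) < 1 + t^2 := by positivity
  have ht2m : (0:ℝ) < 1 - t^2 := by nlinarith
  have hb0 : (0:ℝ) < (1-t)/(1+t) := by positivity
  have hLx : 0 < Real.log (1/x) := by
    apply Real.log_pos
    rw [lt_div_iff₀ hx0]; linarith
  have hsqrtpos : 0 < Real.sqrt (2 * Real.log (1/x)) := by
    apply Real.sqrt_pos.mpr; linarith
  -- rewrite log (1/x)
  have hlogx : Real.log (1/x) = Real.log (1+t^2) - Real.log (1-t^2) := by
    rw [hxval, one_div_div, Real.log_div (ne_of_gt ht2p) (ne_of_gt ht2m)]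
  -- key inequality
  have hA : 2*t ≤ Real.log (1+t) - Real.log (1-t) := aux1 t ⟨le_of_lt ht0, ht1⟩
  have hApos : 0 < Real.log (1+t) - Real.log (1-t) := by linarith
  have hkey : 2*(Real.log (1+t^2) - Real.log (1-t^2))
      ≤ (Real.log (1+t) - Real.log (1-t))^2 := aux2 t ⟨le_of_lt ht0, ht1⟩
  have hsqrtle : Real.sqrt (2 * Real.log (1/x)) ≤ Real.log (1+t) - Real.log (1-t) := by
    rw [show Real.log (1+t) - Real.log (1-t)
        = Real.sqrt ((Real.log (1+t) - Real.log (1-t))^2) by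
      rw [Real.sqrt_sq (le_of_lt hApos)]]
    apply Real.sqrt_le_sqrt
    rw [hlogx]; linarith
  -- now conclude
  rw [hbval, Real.rpow_def_of_pos hb0, Real.exp_le_exp]
  have hlogb : Real.log ((1-t)/(1+t)) = -(Real.log (1+t) - Real.log (1-t)) := by
    rw [Real.log_div (ne_of_gt ht1m) (ne_of_gt ht1p)]; ring
  rw [hlogb]
  rw [neg_mul, neg_le_neg_iff]
  have hp0 : 0 ≤ 1 / Real.sqrt (2 * Real.log (1/x)) := by positivity
  have hmul : Real.sqrt (2*Real.log (1/x)) * (1/Real.sqrt (2*Real.log (1/x)))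
      ≤ (Real.log (1+t) - Real.log (1-t)) * (1 / Real.sqrt (2 * Real.log (1/x))) :=
    mul_le_mul_of_nonneg_right hsqrtle hp0
  rw [mul_one_div, div_self (ne_of_gt hsqrtpos)] at hmul
  exact hmul
end

section
/- Let Y₁,…,Y_D be independent σ²-subgaussian random variables with mean μ, let η > 1, 0 < ε < (η-1)/(7(η+1)), s > 1, N ≥ 1, and let w₁,…,w_D be real numbers with |wⱼ - 1/N| < ε/N for all j. Then P[ (∑ wⱼYⱼ)/(∑ wⱼ) ≥ μ + √(4ησ² ln s / (N ∑ wⱼ)) ] ≤ s^{-(η+1)}. -/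
open MeasureTheory ProbabilityTheory

set_option maxHeartbeats 1000000

theorem stmt_10 {Ω : Type*} [MeasurableSpace Ω] (P : Measure Ω) [IsProbabilityMeasure P]
    (D : ℕ) (hD : 1 ≤ D) (Y : Fin D → Ω → ℝ) (hmeas : ∀ j, Measurable (Y j))
    (hindep : iIndepFun Y P)
    (σ μ : ℝ) (hσ : 0 < σ)
    (hsub : ∀ j, ∀ l : ℝ, Integrable (fun ω => Real.exp (l * (Y j ω - μ))) P ∧
      (∫ ω, Real.exp (l * (Y j ω - μ)) ∂P) ≤ Real.exp (l ^ 2 * σ ^ 2 / 2))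
    (η ε s : ℝ) (hη : 1 < η) (hε0 : 0 < ε) (hε : ε < (η - 1) / (7 * (η + 1))) (hs : 1 < s)
    (N : ℕ) (hN : 1 ≤ N)
    (w : Fin D → ℝ) (hw : ∀ j, |w j - 1 / N| < ε / N) :
    P {ω | μ + Real.sqrt (4 * η * σ ^ 2 * Real.log s / (N * ∑ j, w j))
            ≤ (∑ j, w j * Y j ω) / (∑ j, w j)} ≤
      ENNReal.ofReal (s ^ (-(η + 1))) := by
  classical
  have hη0 : (0:ℝ) < η := by linarith
  have hNpos : (0:ℝ) < (N:ℝ) := by exact_mod_cast hN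
  have hDpos : (0:ℝ) < (D:ℝ) := by exact_mod_cast hD
  have h7 : (0:ℝ) < 7 * (η + 1) := by linarith
  have hε' : ε * (7 * (η + 1)) < η - 1 := (lt_div_iff₀ h7).mp hε
  have hεlt : ε < 1 := by nlinarith
  -- bounds on w j
  have hwlb : ∀ j, (1 - ε) / N < w j := by
    intro j
    have h := (abs_lt.mp (hw j)).1
    have : (1:ℝ)/N - ε/N < w j := by linarith
    calc (1 - ε)/(N:ℝ) = 1/N - ε/N := by ring
      _ < w j := this
  have hwub : ∀ j, w j < (1 + ε) / N := by
    intro j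
    have h := (abs_lt.mp (hw j)).2
    calc w j < 1/(N:ℝ) + ε/N := by linarith
      _ = (1 + ε)/N := by ring
  have hwpos : ∀ j, 0 < w j := fun j =>
    lt_trans (div_pos (by linarith) hNpos) (hwlb j)
  set W := ∑ j, w j with hW
  set S₂ := ∑ j, (w j) ^ 2 with hS₂
  have hWpos : 0 < W := Finset.sum_pos (fun j _ => hwpos j) (by simp [Finset.univ_nonempty_iff]; exact Fin.pos_iff_nonempty.mp hD)
  have hS₂pos : 0 < S₂ := Finset.sum_pos (fun j _ => pow_pos (hwpos j) 2) (by simp [Finset.univ_nonempty_iff]; exact Fin.pos_iff_nonempty.mp hD)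
  -- sum bounds
  have hS : S₂ * (N:ℝ)^2 ≤ D * (1 + ε)^2 := by
    rw [hS₂, Finset.sum_mul]
    calc ∑ j, (w j)^2 * (N:ℝ)^2 ≤ ∑ _j : Fin D, (1 + ε)^2 := by
          refine Finset.sum_le_sum fun j _ => ?_
          have h1 : w j * N ≤ 1 + ε := ((lt_div_iff₀ hNpos).mp (hwub j)).le
          have h0 : 0 ≤ w j * N := mul_nonneg (hwpos j).le hNpos.le
          have := pow_le_pow_left₀ h0 h1 2
          nlinarith [this]
      _ = D * (1 + ε)^2 := by simp [Finset.sum_const, Finset.card_univ, mul_comm]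
  have hW' : (D:ℝ) * (1 - ε) ≤ W * N := by
    rw [hW, Finset.sum_mul]
    calc (D:ℝ) * (1 - ε) = ∑ _j : Fin D, (1 - ε) := by
          simp [Finset.sum_const, Finset.card_univ, mul_comm]; ring
      _ ≤ ∑ j, w j * (N:ℝ) := by
          refine Finset.sum_le_sum fun j _ => ?_
          exact ((div_lt_iff₀ hNpos).mp (hwlb j)).le
  have key0 : (η + 1) * (1 + ε)^2 ≤ 2 * η * (1 - ε) := by
    have hsq : ε ^ 2 < ε := by nlinarith
    nlinarith [mul_pos hε0 hη0]
  have key : (η + 1) * ((N:ℝ) * S₂) ≤ 2 * η * W := by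
    have e1 : (η + 1) * (S₂ * (N:ℝ)^2) ≤ (η + 1) * ((D:ℝ) * (1 + ε)^2) :=
      mul_le_mul_of_nonneg_left hS (by linarith)
    have e3 : (D:ℝ) * ((η + 1) * (1 + ε)^2) ≤ D * (2 * η * (1 - ε)) :=
      mul_le_mul_of_nonneg_left key0 hDpos.le
    have e5 : 2 * η * ((D:ℝ) * (1 - ε)) ≤ 2 * η * (W * N) :=
      mul_le_mul_of_nonneg_left hW' (by linarith)
    have chain : (η + 1) * (S₂ * (N:ℝ)^2) ≤ 2 * η * (W * N) := by
      calc (η + 1) * (S₂ * (N:ℝ)^2) ≤ (η + 1) * ((D:ℝ) * (1 + ε)^2) := e1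
        _ = (D:ℝ) * ((η + 1) * (1 + ε)^2) := by ring
        _ ≤ (D:ℝ) * (2 * η * (1 - ε)) := e3
        _ = 2 * η * ((D:ℝ) * (1 - ε)) := by ring
        _ ≤ 2 * η * (W * N) := e5
    have h2 : ((η + 1) * ((N:ℝ) * S₂)) * N ≤ (2 * η * W) * N := by linarith [chain]
    exact le_of_mul_le_mul_right h2 hNpos
  -- probabilistic part
  have hlogs : 0 < Real.log s := Real.log_pos hs
  set t₀ := Real.sqrt (4 * η * σ^2 * Real.log s / (N * W)) with ht₀
  have harg : 0 ≤ 4 * η * σ^2 * Real.log s / (N * W) := by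
    apply div_nonneg
    · have : (0:ℝ) ≤ 4 * η := by linarith
      exact mul_nonneg (mul_nonneg this (sq_nonneg σ)) hlogs.le
    · exact (mul_pos hNpos hWpos).le
  have ht₀sq : t₀^2 = 4 * η * σ^2 * Real.log s / (N * W) := Real.sq_sqrt harg
  have ht₀nn : 0 ≤ t₀ := Real.sqrt_nonneg _
  set X : Fin D → Ω → ℝ := fun j ω => w j * (Y j ω - μ) with hX
  have hXmeas : ∀ j, Measurable (X j) := fun j => ((hmeas j).sub_const μ).const_mul (w j)
  have hXindep : iIndepFun X P := by
    have := hindep.comp (fun j (y : ℝ) => w j * (y - μ))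
      (fun j => (measurable_id.sub_const μ).const_mul (w j))
    exact this
  set lam := W * t₀ / (σ^2 * S₂) with hlam
  have hσ2S : (0:ℝ) < σ^2 * S₂ := mul_pos (pow_pos hσ 2) hS₂pos
  have hlamnn : 0 ≤ lam := div_nonneg (mul_nonneg hWpos.le ht₀nn) hσ2S.le
  have hset : {ω | μ + t₀ ≤ (∑ j, w j * Y j ω) / W} = {ω | W * t₀ ≤ (∑ j, X j) ω} := by
    ext ω
    simp only [Set.mem_setOf_eq, Finset.sum_apply]
    have hsum : ∑ j, X j ω = (∑ j, w j * Y j ω) - μ * W := by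
      simp only [hX, mul_sub, Finset.sum_sub_distrib, hW, Finset.mul_sum]
      congr 1
      exact Finset.sum_congr rfl fun j _ => by ring
    rw [le_div_iff₀ hWpos]
    rw [hsum]
    constructor <;> intro h <;> nlinarith
  have hint : ∀ j ∈ Finset.univ, Integrable (fun ω => Real.exp (lam * X j ω)) P := by
    intro j _
    have := (hsub j (lam * w j)).1
    simpa [hX, mul_assoc] using this
  have hintsum := hXindep.integrable_exp_mul_sum hXmeas hint
  have hcher := measure_ge_le_exp_mul_mgf (μ := P) (X := ∑ j, X j) (W * t₀) hlamnn hintsum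
  have hmgfj : ∀ j, mgf (X j) P lam ≤ Real.exp (lam^2 * (w j)^2 * σ^2 / 2) := by
    intro j
    have heq : mgf (X j) P lam = ∫ ω, Real.exp ((lam * w j) * (Y j ω - μ)) ∂P := by
      simp only [mgf, hX, mul_assoc]
    rw [heq]
    refine le_trans (hsub j (lam * w j)).2 (le_of_eq ?_)
    congr 1; ring
  have hmgf : mgf (∑ j, X j) P lam ≤ Real.exp (lam^2 * σ^2 * S₂ / 2) := by
    rw [hXindep.mgf_sum hXmeas]
    calc ∏ j, mgf (X j) P lam ≤ ∏ j, Real.exp (lam^2 * (w j)^2 * σ^2 / 2) :=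
          Finset.prod_le_prod (fun j _ => mgf_nonneg) (fun j _ => hmgfj j)
      _ = Real.exp (∑ j, lam^2 * (w j)^2 * σ^2 / 2) := (Real.exp_sum _ _).symm
      _ = Real.exp (lam^2 * σ^2 * S₂ / 2) := by
          congr 1
          rw [hS₂, Finset.mul_sum, Finset.sum_div]
          exact Finset.sum_congr rfl fun j _ => by ring
  have hexp : -lam * (W * t₀) + lam^2 * σ^2 * S₂ / 2 = -((W * t₀)^2) / (2 * (σ^2 * S₂)) := by
    rw [hlam]
    field_simp
    ring
  have hfinal : -((W * t₀)^2) / (2 * (σ^2 * S₂)) ≤ -(η + 1) * Real.log s := by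
    have hWt : (W * t₀)^2 = 4 * η * σ^2 * Real.log s * W / N := by
      rw [mul_pow, ht₀sq]
      field_simp
    rw [hWt, neg_div, neg_mul, neg_le_neg_iff]
    rw [div_div, le_div_iff₀ (by positivity : (0:ℝ) < (N:ℝ) * (2 * (σ^2 * S₂)))]
    have hmul := mul_le_mul_of_nonneg_left key
      (by positivity : (0:ℝ) ≤ 2 * σ^2 * Real.log s)
    nlinarith [hmul]
  -- assemble
  have hPle : (P {ω | W * t₀ ≤ (∑ j, X j) ω}).toReal ≤ s ^ (-(η + 1)) := by
    have h1 : (P {ω | W * t₀ ≤ (∑ j, X j) ω}).toReal ≤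
        Real.exp (-lam * (W * t₀)) * Real.exp (lam^2 * σ^2 * S₂ / 2) := by
      refine hcher.trans ?_
      exact mul_le_mul_of_nonneg_left hmgf (Real.exp_pos _).le
    rw [← Real.exp_add, hexp] at h1
    have h2 : Real.exp (-((W * t₀)^2) / (2 * (σ^2 * S₂))) ≤ Real.exp (-(η + 1) * Real.log s) :=
      Real.exp_le_exp.mpr hfinal
    have h3 : Real.exp (-(η + 1) * Real.log s) = s ^ (-(η + 1)) := by
      rw [Real.rpow_def_of_pos (by linarith : (0:ℝ) < s), mul_comm]
    linarith [h1, h2, h3 ▸ h2]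
  calc P {ω | μ + t₀ ≤ (∑ j, w j * Y j ω) / W}
      = ENNReal.ofReal ((P {ω | W * t₀ ≤ (∑ j, X j) ω}).toReal) := by
        rw [hset, ENNReal.ofReal_toReal (measure_ne_top P _)]
    _ ≤ ENNReal.ofReal (s ^ (-(η + 1))) := ENNReal.ofReal_le_ofReal hPle
end
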